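/- Consider the ODE $\partial_t (a_t, b_t) = \overline{F}(a_t, b_t)$ on $\mathbb{R}^2$ where $\overline{F}(a,b) = \left( \int \cos \, d\overline{\pi}(a,b) - a, \int \sin \, d\overline{\pi}(a,b) - b \right)$ and $\overline{\pi}(a,b)(dz) \propto e^{-U(z) + \rho(a\cos z + b \sin z)} dz$ on $\mathbb{T}$, with $U$ continuous satisfying $\int \cos \, dm_U = \int \sin \, dm_U = 0$ for $m_U \propto e^{-U}$. Then $(0,0)$ is an equilibrium of $\overline{F}$ and the Jacobian of $\overline{F}$ at $(0,0)$ equals $\rho M_U - I$, where $M_U = \begin{pmatrix} \int \cos^2 dm_U & \int \cos\sin\, dm_U \\ \int \cos\sin\, dm_U & \int \sin^2 dm_U \end{pmatrix}$. -/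

import Mathlib

open Real MeasureTheory
open Set

set_option maxHeartbeats 1000000 in
lemma aux_deriv (U : ℝ → ℝ) (hU : Continuous U) (ρ : ℝ) (w : ℝ → ℝ) (hw : Continuous w)
    (hw1 : ∀ z, |w z| ≤ 1) :
    HasFDerivAt (fun p : ℝ × ℝ => ∫ z in Ioc (-π) π,
        w z * exp (-U z + ρ * (p.1 * cos z + p.2 * sin z)))
      ((ρ * ∫ z in Ioc (-π) π, w z * cos z * exp (-U z)) • ContinuousLinearMap.fst ℝ ℝ ℝ
        + (ρ * ∫ z in Ioc (-π) π, w z * sin z * exp (-U z)) • ContinuousLinearMap.snd ℝ ℝ ℝ)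
      (0, 0) := by
  obtain ⟨M, hM⟩ : ∃ M, ∀ z ∈ Icc (-π) π, -U z ≤ M := by
    obtain ⟨M, hM⟩ := isCompact_Icc.exists_bound_of_continuousOn
      (hU.neg.continuousOn (s := Icc (-π) π))
    exact ⟨M, fun z hz => (le_abs_self _).trans (hM z hz)⟩
  set F : ℝ × ℝ → ℝ → ℝ := fun p z => w z * exp (-U z + ρ * (p.1 * cos z + p.2 * sin z))
    with hFdef
  set F' : ℝ × ℝ → ℝ → (ℝ × ℝ) →L[ℝ] ℝ := fun p z =>
    (w z * exp (-U z + ρ * (p.1 * cos z + p.2 * sin z))) •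
      ((ρ * cos z) • ContinuousLinearMap.fst ℝ ℝ ℝ + (ρ * sin z) • ContinuousLinearMap.snd ℝ ℝ ℝ)
    with hF'def
  have hcont : ∀ p : ℝ × ℝ, Continuous (F p) := fun p =>
    hw.mul (((hU.neg).add (continuous_const.mul
      ((continuous_const.mul Real.continuous_cos).add
        (continuous_const.mul Real.continuous_sin)))).rexp)
  have hcont' : Continuous (F' (0, 0)) :=
    (hcont (0, 0)).smul
      (((continuous_const.mul Real.continuous_cos).smul continuous_const).add
        ((continuous_const.mul Real.continuous_sin).smul continuous_const))
  have key : HasFDerivAt (fun p : ℝ × ℝ => ∫ z in Ioc (-π) π, F p z)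
      (∫ z in Ioc (-π) π, F' (0, 0) z) (0, 0) := by
    apply hasFDerivAt_integral_of_dominated_of_fderiv_le
      (bound := fun _ => (1 * exp (M + 2 * |ρ|)) * (2 * |ρ|)) (Metric.ball_mem_nhds ((0 : ℝ), (0 : ℝ)) one_pos)
    · filter_upwards with p using (hcont p).aestronglyMeasurable
    · exact (hcont (0, 0)).integrableOn_Ioc
    · exact hcont'.aestronglyMeasurable
    · rw [ae_restrict_iff' measurableSet_Ioc]
      filter_upwards with z hz p hp
      have hzI : z ∈ Icc (-π) π := Ioc_subset_Icc_self hz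
      have hpn : ‖p‖ ≤ 1 := by
        have h0 : dist p (0, 0) < 1 := hp
        rw [dist_eq_norm] at h0
        simpa [show ((0 : ℝ), (0 : ℝ)) = (0 : ℝ × ℝ) from rfl] using h0.le
      have h1 : |p.1| ≤ 1 := (norm_fst_le p).trans hpn
      have h2 : |p.2| ≤ 1 := (norm_snd_le p).trans hpn
      have htrig : |p.1 * cos z + p.2 * sin z| ≤ 2 := by
        calc |p.1 * cos z + p.2 * sin z| ≤ |p.1 * cos z| + |p.2 * sin z| := abs_add_le _ _
        _ = |p.1| * |cos z| + |p.2| * |sin z| := by rw [abs_mul, abs_mul]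
        _ ≤ 1 * 1 + 1 * 1 := by
            gcongr
            · exact abs_cos_le_one z
            · exact abs_sin_le_one z
        _ = 2 := by norm_num
      have hexp : exp (-U z + ρ * (p.1 * cos z + p.2 * sin z)) ≤ exp (M + 2 * |ρ|) := by
        apply exp_le_exp.2
        have h3 : ρ * (p.1 * cos z + p.2 * sin z) ≤ 2 * |ρ| := by
          calc ρ * (p.1 * cos z + p.2 * sin z) ≤ |ρ * (p.1 * cos z + p.2 * sin z)| := le_abs_self _
          _ = |ρ| * |p.1 * cos z + p.2 * sin z| := abs_mul _ _
          _ ≤ |ρ| * 2 := mul_le_mul_of_nonneg_left htrig (abs_nonneg _)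
          _ = 2 * |ρ| := mul_comm _ _
        linarith [hM z hzI]
      refine ContinuousLinearMap.opNorm_le_bound _ (by positivity) fun q => ?_
      have happ : (F' p z) q = (w z * exp (-U z + ρ * (p.1 * cos z + p.2 * sin z))) *
          (ρ * cos z * q.1 + ρ * sin z * q.2) := by
        rw [hF'def]
        simp only [ContinuousLinearMap.smul_apply, ContinuousLinearMap.add_apply,
          ContinuousLinearMap.coe_fst', ContinuousLinearMap.coe_snd', smul_eq_mul]
        try ring
      rw [happ, Real.norm_eq_abs, abs_mul]
      have hqa : |ρ * cos z * q.1 + ρ * sin z * q.2| ≤ 2 * |ρ| * ‖q‖ := by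
        calc |ρ * cos z * q.1 + ρ * sin z * q.2|
            ≤ |ρ * cos z * q.1| + |ρ * sin z * q.2| := abs_add_le _ _
        _ = |ρ| * |cos z| * |q.1| + |ρ| * |sin z| * |q.2| := by
            rw [abs_mul, abs_mul, abs_mul, abs_mul]
        _ ≤ |ρ| * 1 * ‖q‖ + |ρ| * 1 * ‖q‖ := by
            gcongr
            · exact abs_cos_le_one z
            · exact norm_fst_le q
            · exact abs_sin_le_one z
            · exact norm_snd_le q
        _ = 2 * |ρ| * ‖q‖ := by ring
      have hwa : |w z * exp (-U z + ρ * (p.1 * cos z + p.2 * sin z))| ≤ 1 * exp (M + 2 * |ρ|) := by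
        rw [abs_mul, abs_exp]
        exact mul_le_mul (hw1 z) hexp (exp_pos _).le zero_le_one
      calc |w z * exp (-U z + ρ * (p.1 * cos z + p.2 * sin z))| *
            |ρ * cos z * q.1 + ρ * sin z * q.2|
          ≤ (1 * exp (M + 2 * |ρ|)) * (2 * |ρ| * ‖q‖) :=
            mul_le_mul hwa hqa (abs_nonneg _) (by positivity)
      _ = (1 * exp (M + 2 * |ρ|)) * (2 * |ρ|) * ‖q‖ := by ring
    · exact integrable_const _
    · filter_upwards with z p hp
      have hline : HasFDerivAt (fun q : ℝ × ℝ => -U z + ρ * (q.1 * cos z + q.2 * sin z))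
          ((ρ * cos z) • ContinuousLinearMap.fst ℝ ℝ ℝ
            + (ρ * sin z) • ContinuousLinearMap.snd ℝ ℝ ℝ) p := by
        have h1 : HasFDerivAt (fun q : ℝ × ℝ => q.1 * cos z + q.2 * sin z)
            ((cos z) • ContinuousLinearMap.fst ℝ ℝ ℝ
              + (sin z) • ContinuousLinearMap.snd ℝ ℝ ℝ) p := by
          apply ((hasFDerivAt_fst.mul_const (cos z)).add
            (hasFDerivAt_snd.mul_const (sin z))).congr_fderiv
          refine ContinuousLinearMap.ext fun q => ?_
          simp only [ContinuousLinearMap.add_apply, ContinuousLinearMap.smulRight_apply,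
            ContinuousLinearMap.coe_fst', ContinuousLinearMap.coe_snd',
            ContinuousLinearMap.smul_apply, smul_eq_mul, ContinuousLinearMap.one_apply]
          try ring
        have h2 := (h1.const_mul ρ).const_add (-U z)
        apply h2.congr_fderiv
        refine ContinuousLinearMap.ext fun q => ?_
        simp only [ContinuousLinearMap.smul_apply, ContinuousLinearMap.add_apply,
          ContinuousLinearMap.coe_fst', ContinuousLinearMap.coe_snd', smul_eq_mul]
        try ring
      have h3 := (Real.hasDerivAt_exp
        (-U z + ρ * (p.1 * cos z + p.2 * sin z))).comp_hasFDerivAt p hline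
      have h4 := h3.const_mul (w z)
      apply h4.congr_fderiv
      rw [hF'def]
      refine ContinuousLinearMap.ext fun q => ?_
      simp only [ContinuousLinearMap.smul_apply, ContinuousLinearMap.add_apply,
        ContinuousLinearMap.coe_fst', ContinuousLinearMap.coe_snd', smul_eq_mul,
        ContinuousLinearMap.coe_smul', Pi.smul_apply]
      ring
  have hint : Integrable (F' (0, 0)) (volume.restrict (Ioc (-π) π)) :=
    hcont'.integrableOn_Ioc
  have heq : (∫ z in Ioc (-π) π, F' (0, 0) z) =
      (ρ * ∫ z in Ioc (-π) π, w z * cos z * exp (-U z)) • ContinuousLinearMap.fst ℝ ℝ ℝ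
        + (ρ * ∫ z in Ioc (-π) π, w z * sin z * exp (-U z)) • ContinuousLinearMap.snd ℝ ℝ ℝ := by
    refine ContinuousLinearMap.ext fun q => ?_
    rw [ContinuousLinearMap.integral_apply hint]
    have hic : IntegrableOn (fun z => w z * cos z * exp (-U z)) (Ioc (-π) π) volume :=
      ((hw.mul Real.continuous_cos).mul (hU.neg.rexp)).integrableOn_Ioc
    have his : IntegrableOn (fun z => w z * sin z * exp (-U z)) (Ioc (-π) π) volume :=
      ((hw.mul Real.continuous_sin).mul (hU.neg.rexp)).integrableOn_Ioc
    have hptw : ∀ z, (F' (0, 0) z) q =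
        (ρ * q.1) * (w z * cos z * exp (-U z)) + (ρ * q.2) * (w z * sin z * exp (-U z)) := by
      intro z
      rw [hF'def]
      simp
      ring
    rw [integral_congr_ae (Filter.Eventually.of_forall hptw),
      integral_add (hic.const_mul _) (his.const_mul _),
      integral_const_mul, integral_const_mul]
    simp
    ring
  rw [← heq]
  exact key

/-- For the vector field `F̄(a,b) = (∫ cos dπ̄(a,b) - a, ∫ sin dπ̄(a,b) - b)`, where
`π̄(a,b) ∝ e^{-U + ρ(a cos + b sin)}` and the first trigonometric moments of
`m_U ∝ e^{-U}` vanish, the origin is an equilibrium whose Jacobian is `ρ M_U - I`. -/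
theorem stmt18 (U : ℝ → ℝ) (hU : Continuous U) (hper : Function.Periodic U (2 * π)) (ρ : ℝ)
    (hcos : (∫ z in (-π)..π, cos z * exp (-U z)) = 0)
    (hsin : (∫ z in (-π)..π, sin z * exp (-U z)) = 0)
    (m11 m12 m22 : ℝ)
    (hm11 : m11 = (∫ z in (-π)..π, cos z ^ 2 * exp (-U z)) / ∫ z in (-π)..π, exp (-U z))
    (hm12 : m12 = (∫ z in (-π)..π, cos z * sin z * exp (-U z)) / ∫ z in (-π)..π, exp (-U z))
    (hm22 : m22 = (∫ z in (-π)..π, sin z ^ 2 * exp (-U z)) / ∫ z in (-π)..π, exp (-U z))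
    (Fbar : ℝ × ℝ → ℝ × ℝ)
    (hF : ∀ p : ℝ × ℝ, Fbar p =
      ((∫ z in (-π)..π, cos z * exp (-U z + ρ * (p.1 * cos z + p.2 * sin z))) /
          (∫ z in (-π)..π, exp (-U z + ρ * (p.1 * cos z + p.2 * sin z))) - p.1,
       (∫ z in (-π)..π, sin z * exp (-U z + ρ * (p.1 * cos z + p.2 * sin z))) /
          (∫ z in (-π)..π, exp (-U z + ρ * (p.1 * cos z + p.2 * sin z))) - p.2)) :
    Fbar (0, 0) = (0, 0) ∧
    HasFDerivAt Fbar
      (((ρ * m11 - 1) • ContinuousLinearMap.fst ℝ ℝ ℝ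
          + (ρ * m12) • ContinuousLinearMap.snd ℝ ℝ ℝ).prod
        ((ρ * m12) • ContinuousLinearMap.fst ℝ ℝ ℝ
          + (ρ * m22 - 1) • ContinuousLinearMap.snd ℝ ℝ ℝ))
      (0, 0) := by
  have hle : -π ≤ π := neg_le_self pi_pos.le
  have hB0pos : 0 < ∫ z in Ioc (-π) π, exp (-U z) := by
    rw [← intervalIntegral.integral_of_le hle]
    apply intervalIntegral.intervalIntegral_pos_of_pos_on
    · exact (hU.neg.rexp).intervalIntegrable _ _
    · intro x _; exact exp_pos _
    · exact neg_lt_self pi_pos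
  have hcos0 : (∫ z in Ioc (-π) π, cos z * exp (-U z)) = 0 := by
    rw [← intervalIntegral.integral_of_le hle]; exact hcos
  have hsin0 : (∫ z in Ioc (-π) π, sin z * exp (-U z)) = 0 := by
    rw [← intervalIntegral.integral_of_le hle]; exact hsin
  have hm11' : m11 = (∫ z in Ioc (-π) π, cos z * cos z * exp (-U z)) /
      (∫ z in Ioc (-π) π, exp (-U z)) := by
    rw [hm11, ← intervalIntegral.integral_of_le hle, ← intervalIntegral.integral_of_le hle]
    congr 1
    apply intervalIntegral.integral_congr
    intro z _; ring
  have hm12' : m12 = (∫ z in Ioc (-π) π, cos z * sin z * exp (-U z)) /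
      (∫ z in Ioc (-π) π, exp (-U z)) := by
    rw [hm12, ← intervalIntegral.integral_of_le hle, ← intervalIntegral.integral_of_le hle]
  have hm12'' : m12 = (∫ z in Ioc (-π) π, sin z * cos z * exp (-U z)) /
      (∫ z in Ioc (-π) π, exp (-U z)) := by
    rw [hm12', div_left_inj' hB0pos.ne']
    apply setIntegral_congr_fun measurableSet_Ioc
    intro z _; ring
  have hm22' : m22 = (∫ z in Ioc (-π) π, sin z * sin z * exp (-U z)) /
      (∫ z in Ioc (-π) π, exp (-U z)) := by
    rw [hm22, ← intervalIntegral.integral_of_le hle, ← intervalIntegral.integral_of_le hle]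
    congr 1
    apply intervalIntegral.integral_congr
    intro z _; ring
  -- equilibrium
  have heq0 : Fbar (0, 0) = (0, 0) := by
    rw [hF (0, 0)]
    norm_num [hcos, hsin]
  refine ⟨heq0, ?_⟩
  -- derivatives of the three parametric integrals
  have hA := aux_deriv U hU ρ Real.cos Real.continuous_cos (fun z => abs_cos_le_one z)
  have hC := aux_deriv U hU ρ Real.sin Real.continuous_sin (fun z => abs_sin_le_one z)
  have hB1 := aux_deriv U hU ρ (fun _ => (1 : ℝ)) continuous_const (fun z => by norm_num)
  have hB' : HasFDerivAt (fun p : ℝ × ℝ => ∫ z in Ioc (-π) π,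
      exp (-U z + ρ * (p.1 * cos z + p.2 * sin z)))
      ((ρ * ∫ z in Ioc (-π) π, cos z * exp (-U z)) • ContinuousLinearMap.fst ℝ ℝ ℝ
        + (ρ * ∫ z in Ioc (-π) π, sin z * exp (-U z)) • ContinuousLinearMap.snd ℝ ℝ ℝ)
      (0, 0) := by simpa only [one_mul] using hB1
  have hB00 : (∫ z in Ioc (-π) π,
      exp (-U z + ρ * (((0 : ℝ), (0 : ℝ)).1 * cos z + ((0 : ℝ), (0 : ℝ)).2 * sin z))) =
      ∫ z in Ioc (-π) π, exp (-U z) := by norm_num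
  have hBinv := (hasDerivAt_inv (by rw [hB00]; exact hB0pos.ne')).comp_hasFDerivAt
    ((0 : ℝ), (0 : ℝ)) hB'
  have hFeq : Fbar = fun p : ℝ × ℝ =>
      ((∫ z in Ioc (-π) π, cos z * exp (-U z + ρ * (p.1 * cos z + p.2 * sin z))) *
          (∫ z in Ioc (-π) π, exp (-U z + ρ * (p.1 * cos z + p.2 * sin z)))⁻¹ - p.1,
       (∫ z in Ioc (-π) π, sin z * exp (-U z + ρ * (p.1 * cos z + p.2 * sin z))) *
          (∫ z in Ioc (-π) π, exp (-U z + ρ * (p.1 * cos z + p.2 * sin z)))⁻¹ - p.2) := by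
    funext p
    rw [hF p]
    simp only [intervalIntegral.integral_of_le hle, div_eq_mul_inv]
  have hf1 : HasFDerivAt (fun p : ℝ × ℝ =>
      (∫ z in Ioc (-π) π, cos z * exp (-U z + ρ * (p.1 * cos z + p.2 * sin z))) *
        (∫ z in Ioc (-π) π, exp (-U z + ρ * (p.1 * cos z + p.2 * sin z)))⁻¹ - p.1)
      ((ρ * m11 - 1) • ContinuousLinearMap.fst ℝ ℝ ℝ
        + (ρ * m12) • ContinuousLinearMap.snd ℝ ℝ ℝ) (0, 0) := by
    refine ((hA.mul hBinv).sub hasFDerivAt_fst).congr_fderiv ?_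
    refine ContinuousLinearMap.ext fun q => ?_
    simp only [ContinuousLinearMap.coe_sub', Pi.sub_apply, ContinuousLinearMap.add_apply,
      ContinuousLinearMap.smul_apply, ContinuousLinearMap.coe_fst', ContinuousLinearMap.coe_snd',
      smul_eq_mul, zero_mul, mul_zero, add_zero, Prod.fst, Prod.snd, Function.comp_apply]
    rw [hcos0, hsin0, hm11', hm12']
    field_simp
    ring
  have hf2 : HasFDerivAt (fun p : ℝ × ℝ =>
      (∫ z in Ioc (-π) π, sin z * exp (-U z + ρ * (p.1 * cos z + p.2 * sin z))) *
        (∫ z in Ioc (-π) π, exp (-U z + ρ * (p.1 * cos z + p.2 * sin z)))⁻¹ - p.2)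
      ((ρ * m12) • ContinuousLinearMap.fst ℝ ℝ ℝ
        + (ρ * m22 - 1) • ContinuousLinearMap.snd ℝ ℝ ℝ) (0, 0) := by
    refine ((hC.mul hBinv).sub hasFDerivAt_snd).congr_fderiv ?_
    refine ContinuousLinearMap.ext fun q => ?_
    simp only [ContinuousLinearMap.coe_sub', Pi.sub_apply, ContinuousLinearMap.add_apply,
      ContinuousLinearMap.smul_apply, ContinuousLinearMap.coe_fst', ContinuousLinearMap.coe_snd',
      smul_eq_mul, zero_mul, mul_zero, add_zero, Prod.fst, Prod.snd, Function.comp_apply]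
    rw [hcos0, hsin0, hm12'', hm22']
    field_simp
    ring
  rw [hFeq]
  exact hf1.prodMk hf2
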